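/- The logarithmic derivative of the Riemann xi function at s = 0 satisfies ξ′(0)/ξ(0) = (1/2)·log(4π) − 1 − γ/2, where γ is the Euler–Mascheroni constant. Equivalently, since ξ(0) = 1/2, ξ′(0) = (1/4)·log(4π) − 1/2 − γ/4. -/

import Mathlib

open Complex Real Filter

/-- The logarithmic derivative of the Riemann xi function at `s = 0` satisfies
`ξ'(0)/ξ(0) = (1/2) log (4π) − 1 − γ/2`; equivalently, since `ξ(0) = 1/2`,
`ξ'(0) = (1/4) log (4π) − 1/2 − γ/4`. -/

noncomputable def myphi : ℂ → ℂ := Function.update (fun s => (s - 1) * riemannZeta s) 1 1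

lemma myphi_hasDeriv : HasDerivAt myphi (Real.eulerMascheroniConstant : ℂ) 1 := by
  rw [hasDerivAt_iff_tendsto_slope]
  apply tendsto_riemannZeta_sub_one_div.congr'
  filter_upwards [self_mem_nhdsWithin] with s hs
  have hs' : s ≠ 1 := hs
  simp only [slope, myphi, Function.update_of_ne hs', Function.update_self, vsub_eq_sub,
    smul_eq_mul]
  field_simp [sub_ne_zero.mpr hs']

lemma key_eq (ξ : ℂ → ℂ)
    (hξ_eq : ∀ s : ℂ, s ≠ 0 → s ≠ 1 →
      ξ s = s * (s - 1) / 2 * (Real.pi : ℂ) ^ (-s / 2) * Complex.Gamma (s / 2) * riemannZeta s)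
    {t : ℂ} (h0 : t ≠ 0) (h1 : t ≠ 1) (hG : Gammaℝ t ≠ 0) :
    ξ t = t * (t - 1) / 2 * completedRiemannZeta t := by
  rw [hξ_eq t h0 h1, riemannZeta_def_of_ne_zero h0]
  rw [Gammaℝ_def] at hG
  rw [Gammaℝ_def, mul_div_assoc', div_eq_iff hG]
  ring

lemma cpow_half : (Real.pi : ℂ) ^ ((1:ℂ) / 2) = ((Real.sqrt Real.pi : ℝ) : ℂ) := by
  rw [show ((1:ℂ)/2) = (((1/2 : ℝ)) : ℂ) by push_cast; ring, ← Complex.ofReal_cpow pi_pos.le,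
    ← Real.sqrt_eq_rpow]

lemma cpow_neg_half : (Real.pi : ℂ) ^ (-(1:ℂ) / 2) = ((Real.sqrt Real.pi)⁻¹ : ℝ) := by
  rw [show (-(1:ℂ)/2) = ((-(1/2) : ℝ) : ℂ) by push_cast; ring, ← Complex.ofReal_cpow pi_pos.le]
  rw [show ((-(1/2):ℝ)) = -(1/2 : ℝ) by ring, Real.rpow_neg pi_pos.le,
    ← Real.sqrt_eq_rpow]

theorem stmt_2 (ξ : ℂ → ℂ) (hξ_diff : Differentiable ℂ ξ)
    (hξ_eq : ∀ s : ℂ, s ≠ 0 → s ≠ 1 →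
      ξ s = s * (s - 1) / 2 * (Real.pi : ℂ) ^ (-s / 2) * Complex.Gamma (s / 2) * riemannZeta s)
    (hξ_zero : ξ 0 = 1 / 2) (hξ_one : ξ 1 = 1 / 2) :
    deriv ξ 0 / ξ 0 =
      ((1 / 2 * Real.log (4 * Real.pi) - 1 - Real.eulerMascheroniConstant / 2 : ℝ) : ℂ) ∧
    deriv ξ 0 =
      ((1 / 4 * Real.log (4 * Real.pi) - 1 / 2 - Real.eulerMascheroniConstant / 4 : ℝ) : ℂ) := by
  -- functional equation near 0
  have hFE : ξ =ᶠ[nhds (0:ℂ)] fun s => ξ (1 - s) := by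
    filter_upwards [Metric.ball_mem_nhds (0:ℂ) (by norm_num : (0:ℝ) < 1/2)] with s hs
    simp only [Metric.mem_ball, dist_zero_right] at hs
    rcases eq_or_ne s 0 with rfl | h0
    · simpa [hξ_zero] using hξ_one.symm
    · have h1 : s ≠ 1 := by rintro rfl; norm_num at hs
      have h1s0 : (1:ℂ) - s ≠ 0 := by
        intro h; apply h1; linear_combination -h
      have h1s1 : (1:ℂ) - s ≠ 1 := by
        intro h; apply h0; linear_combination -h
      have hGs : Gammaℝ s ≠ 0 := by
        rw [Ne, Gammaℝ_eq_zero_iff]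
        rintro ⟨n, rfl⟩
        rcases Nat.eq_zero_or_pos n with rfl | hn
        · simp at h0
        · rw [norm_neg] at hs
          have : (1:ℝ) ≤ ‖(2 * n : ℂ)‖ := by
            rw [show ((2*n : ℂ)) = ((2*n : ℝ) : ℂ) by push_cast; ring, Complex.norm_real,
              Real.norm_eq_abs, _root_.abs_of_nonneg (by positivity)]
            have : (1:ℝ) ≤ n := by exact_mod_cast hn
            linarith
          linarith
      have hG1s : Gammaℝ (1 - s) ≠ 0 := by
        rw [Ne, Gammaℝ_eq_zero_iff]
        rintro ⟨n, hn⟩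
        have hs1 : s = 1 + 2*n := by linear_combination -hn
        rw [hs1] at hs
        have : (1:ℝ) ≤ ‖(1 + 2*n : ℂ)‖ := by
          rw [show ((1 + 2*n : ℂ)) = ((1 + 2*n : ℝ) : ℂ) by push_cast; ring, Complex.norm_real,
            Real.norm_eq_abs, _root_.abs_of_nonneg (by positivity)]
          have : (0:ℝ) ≤ n := n.cast_nonneg
          linarith
        linarith
      rw [key_eq ξ hξ_eq h0 h1 hGs, key_eq ξ hξ_eq h1s0 h1s1 hG1s,
        completedRiemannZeta_one_sub]
      ring
  -- deriv ξ 0 = - deriv ξ 1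
  have hneg : HasDerivAt (fun s : ℂ => ξ (1 - s)) (deriv ξ 1 * -1) 0 := by
    have hinner : HasDerivAt (fun s : ℂ => 1 - s) (-1) 0 := (hasDerivAt_id (0:ℂ)).const_sub 1
    have houter : HasDerivAt ξ (deriv ξ 1) ((fun s : ℂ => 1 - s) 0) := by
      simpa using (hξ_diff 1).hasDerivAt
    exact houter.comp 0 hinner
  have hd01 : deriv ξ 0 = -deriv ξ 1 := by
    rw [hFE.deriv_eq, hneg.deriv]; ring
  -- pieces for deriv at 1
  have hrpos : (0:ℝ) < Real.sqrt Real.pi := Real.sqrt_pos.mpr pi_pos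
  have hrne : ((Real.sqrt Real.pi : ℝ) : ℂ) ≠ 0 := by exact_mod_cast hrpos.ne'
  have hval : (Real.pi : ℂ) ^ (-(1:ℂ) / 2) * Complex.Gamma (1 / 2) = 1 := by
    rw [cpow_neg_half, Complex.Gamma_one_half_eq, cpow_half]
    push_cast
    rw [inv_mul_cancel₀ hrne]
  have hA : HasDerivAt (fun s : ℂ => s / 2) (1/2) 1 := by
    simpa using (hasDerivAt_id (1:ℂ)).div_const 2
  have hB : HasDerivAt (fun s : ℂ => (Real.pi : ℂ) ^ (-s / 2))
      ((Real.pi : ℂ) ^ (-(1:ℂ) / 2) * Complex.log Real.pi * (-1/2)) 1 := by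
    have hinner : HasDerivAt (fun s : ℂ => -s / 2) (-1/2) 1 := by
      simpa using (hasDerivAt_id (1:ℂ)).neg.div_const 2
    simpa using hinner.const_cpow (Or.inl (by exact_mod_cast pi_ne_zero))
  have hC : HasDerivAt (fun s : ℂ => Complex.Gamma (s / 2))
      ((-((Real.sqrt Real.pi : ℝ):ℂ) * ((Real.eulerMascheroniConstant : ℂ) + 2 * Complex.log 2)) * (1/2)) 1 := by
    have houter : HasDerivAt Complex.Gamma
        (-((Real.sqrt Real.pi : ℝ):ℂ) * ((Real.eulerMascheroniConstant : ℂ) + 2 * Complex.log 2))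
        ((fun s : ℂ => s / 2) 1) := by
      simpa using Complex.hasDerivAt_Gamma_one_half
    exact houter.comp 1 hA
  have hξ1 := (hA.mul hB).mul hC |>.mul myphi_hasDeriv
  -- ξ agrees with the product near 1
  have hFE1 : (fun s => ((s / 2 * (Real.pi : ℂ) ^ (-s / 2)) * Complex.Gamma (s / 2)) * myphi s)
      =ᶠ[nhds (1:ℂ)] ξ := by
    filter_upwards [Metric.ball_mem_nhds (1:ℂ) (by norm_num : (0:ℝ) < 1/2)] with s hs
    simp only [Metric.mem_ball, dist_eq_norm] at hs
    rcases eq_or_ne s 1 with rfl | h1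
    · simp only [myphi, Function.update_self, mul_one, hξ_one]
      rw [mul_assoc, hval, mul_one]
    · have h0 : s ≠ 0 := by
        intro h; rw [h] at hs; norm_num at hs
      rw [hξ_eq s h0 h1]
      simp only [myphi, Function.update_of_ne h1]
      ring
  have hlog2 : Complex.log 2 = ((Real.log 2 : ℝ) : ℂ) := by
    rw [show (2:ℂ) = ((2:ℝ):ℂ) by norm_num, ← Complex.ofReal_log (by norm_num)]
  have hlogpi : Complex.log (Real.pi : ℂ) = ((Real.log Real.pi : ℝ) : ℂ) :=
    (Complex.ofReal_log pi_pos.le).symm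
  have hd1 : deriv ξ 1 = (((1:ℝ)/2 - Real.log Real.pi/4 - Real.log 2/2
      + Real.eulerMascheroniConstant/4 : ℝ) : ℂ) := by
    rw [← hFE1.deriv_eq, HasDerivAt.deriv (f := fun s => s / 2 * (Real.pi : ℂ) ^ (-s / 2) * Complex.Gamma (s / 2) * myphi s) hξ1]
    simp only [myphi, Function.update_self, Pi.mul_apply]
    rw [cpow_neg_half, Complex.Gamma_one_half_eq, cpow_half, hlog2, hlogpi]
    push_cast
    linear_combination (1/2 - (Real.log Real.pi : ℂ)/4 - ((Real.log 2 : ℝ) : ℂ)/2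
      + (Real.eulerMascheroniConstant : ℂ)/4) * (inv_mul_cancel₀ hrne)
  have key2 : deriv ξ 0 =
      ((1 / 4 * Real.log (4 * Real.pi) - 1 / 2 - Real.eulerMascheroniConstant / 4 : ℝ) : ℂ) := by
    rw [hd01, hd1]
    have hlog4pi : Real.log (4 * Real.pi) = 2 * Real.log 2 + Real.log Real.pi := by
      rw [Real.log_mul (by norm_num) pi_pos.ne', show (4:ℝ) = 2^2 by norm_num, Real.log_pow]
      push_cast; ring
    rw [hlog4pi]
    push_cast
    ring
  refine ⟨?_, key2⟩
  rw [hξ_zero, key2]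
  push_cast
  field_simp
  ring
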